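/- Force-matching error as an H¹-type distance between coarse potentials: let Ū^PMF, Ū : ℝ^m → ℝ be differentiable with (∇Ū^PMF)∘ξ and (∇Ū)∘ξ in L²(μ;ℝ^m), suppose h satisfies the force-matching condition E_μ[h|σ(ξ)] = (−∇Ū^PMF)∘ξ μ-a.e., and let μ̄ = ξ_*μ be the pushforward (coarse-grained) measure on ℝ^m. Then L(−∇Ū; h) = L(−∇Ū^PMF; h) + ∫_{ℝ^m} ‖∇Ū^PMF(z) − ∇Ū(z)‖² dμ̄(z); i.e. minimizing the force-matching functional over coarse potentials Ū minimizes the μ̄-mean squared difference of the potential gradients ‖∇(Ū^PMF − Ū)‖². -/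

import Mathlib

open MeasureTheory

lemma measurable_gradient_aux {m : ℕ} (f : EuclideanSpace ℝ (Fin m) → ℝ) :
    Measurable (gradient f) :=
  (InnerProductSpace.toDual ℝ
    (EuclideanSpace ℝ (Fin m))).symm.continuous.measurable.comp (measurable_fderiv ℝ f)

lemma memLp_integrable_inner_aux {α E : Type*} [MeasurableSpace α] {μ : Measure α}
    [NormedAddCommGroup E] [InnerProductSpace ℝ E] {f g : α → E}
    (hf : MemLp f 2 μ) (hg : MemLp g 2 μ) :
    Integrable (fun x => (inner ℝ (f x) (g x) : ℝ)) μ := by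
  have h := L2.integrable_inner (𝕜 := ℝ) (hf.toLp f) (hg.toLp g)
  refine h.congr ?_
  filter_upwards [hf.coeFn_toLp, hg.coeFn_toLp] with x hfx hgx
  rw [hfx, hgx]

/-- The cross term vanishes: if `E[X | σ(ξ)] = 0` a.e. and `D` is `σ(ξ)`-measurable,
then `∫ ⟪X, D⟫ dμ = 0`. -/
lemma cross_term_zero {Ω : Type*} [MeasurableSpace Ω] (μ : Measure Ω)
    [IsProbabilityMeasure μ] {m : ℕ} (ξ : Ω → EuclideanSpace ℝ (Fin m))
    (hξ : Measurable ξ) (X D : Ω → EuclideanSpace ℝ (Fin m))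
    (hX2 : MemLp X 2 μ) (hD2 : MemLp D 2 μ)
    (hDmeas : Measurable[MeasurableSpace.comap ξ inferInstance] D)
    (hcondX : μ[X | MeasurableSpace.comap ξ inferInstance] =ᵐ[μ] 0) :
    ∫ ω, (inner ℝ (X ω) (D ω) : ℝ) ∂μ = 0 := by
  have hm : MeasurableSpace.comap ξ inferInstance ≤ ‹MeasurableSpace Ω› := hξ.comap_le
  haveI : SigmaFinite (μ.trim hm) := inferInstance
  have hXint : Integrable X μ := hX2.integrable one_le_two
  -- coordinates of X have zero conditional expectation
  have hXi : ∀ i : Fin m, μ[(fun ω => X ω i) | MeasurableSpace.comap ξ inferInstance]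
      =ᵐ[μ] 0 := by
    intro i
    have hXiint : Integrable (fun ω => X ω i) μ :=
      ((EuclideanSpace.proj i : EuclideanSpace ℝ (Fin m) →L[ℝ] ℝ).comp_memLp'
        hX2).integrable one_le_two
    refine (ae_eq_condExp_of_forall_setIntegral_eq hm hXiint
      (fun s _ _ => (integrable_zero _ _ _).integrableOn)
      (fun s hs hμs => ?_)
      ((@stronglyMeasurable_zero Ω ℝ (MeasurableSpace.comap ξ inferInstance)
        _ _).aestronglyMeasurable )).symm
    have hXs : ∫ ω in s, X ω ∂μ = 0 := by
      rw [← setIntegral_condExp hm hXint hs]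
      calc ∫ ω in s, (μ[X | MeasurableSpace.comap ξ inferInstance]) ω ∂μ
          = ∫ _ω in s, (0 : EuclideanSpace ℝ (Fin m)) ∂μ :=
            integral_congr_ae (ae_restrict_of_ae hcondX)
        _ = 0 := integral_zero _ _
    have hkey := (EuclideanSpace.proj i : EuclideanSpace ℝ (Fin m) →L[ℝ] ℝ).integral_comp_comm
      (hXint.integrableOn (s := s))
    have h2 : ∫ ω in s, X ω i ∂μ = 0 := by
      rw [show (fun ω => X ω i)
          = fun ω => (EuclideanSpace.proj i : EuclideanSpace ℝ (Fin m) →L[ℝ] ℝ) (X ω)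
          from rfl, hkey, hXs, map_zero]
    simp only [Pi.zero_apply, integral_zero, h2]
  -- each coordinate product integrates to zero
  have hterm : ∀ i : Fin m, ∫ ω, X ω i * D ω i ∂μ = 0 := by
    intro i
    have hDi2 : MemLp (fun ω => D ω i) 2 μ :=
      (EuclideanSpace.proj i : EuclideanSpace ℝ (Fin m) →L[ℝ] ℝ).comp_memLp' hD2
    have hXi2 : MemLp (fun ω => X ω i) 2 μ :=
      (EuclideanSpace.proj i : EuclideanSpace ℝ (Fin m) →L[ℝ] ℝ).comp_memLp' hX2
    have hmul : Integrable (fun ω => D ω i * X ω i) μ := by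
      simpa [RCLike.inner_apply] using memLp_integrable_inner_aux (E := ℝ) hXi2 hDi2
    have hDim : StronglyMeasurable[MeasurableSpace.comap ξ inferInstance]
        (fun ω => D ω i) :=
      ((EuclideanSpace.proj i :
        EuclideanSpace ℝ (Fin m) →L[ℝ] ℝ).continuous.measurable.comp
          hDmeas).stronglyMeasurable
    have hce : μ[(fun ω => D ω i * X ω i) | MeasurableSpace.comap ξ inferInstance] =ᵐ[μ]
        (fun ω => D ω i) * μ[(fun ω => X ω i) | MeasurableSpace.comap ξ inferInstance] :=
      condExp_mul_of_stronglyMeasurable_left hDim hmul (hXi2.integrable one_le_two)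
    have hzero : μ[(fun ω => D ω i * X ω i) | MeasurableSpace.comap ξ inferInstance]
        =ᵐ[μ] 0 := by
      filter_upwards [hce, hXi i] with ω h1 h2
      simp only [h1, Pi.mul_apply, h2, Pi.zero_apply, mul_zero]
    have : ∫ ω, D ω i * X ω i ∂μ = 0 := by
      calc ∫ ω, D ω i * X ω i ∂μ
          = ∫ ω, (μ[(fun ω => D ω i * X ω i) |
              MeasurableSpace.comap ξ inferInstance]) ω ∂μ :=
            (integral_condExp hm).symm
        _ = ∫ _ω, (0 : ℝ) ∂μ := integral_congr_ae hzero
        _ = 0 := integral_zero _ _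
    calc ∫ ω, X ω i * D ω i ∂μ = ∫ ω, D ω i * X ω i ∂μ := by
          simp_rw [mul_comm]
      _ = 0 := this
  have hinner : ∀ ω, (inner ℝ (X ω) (D ω) : ℝ) = ∑ i, X ω i * D ω i := by
    intro ω
    simp [PiLp.inner_apply, RCLike.inner_apply, mul_comm]
  rw [integral_congr_ae (Filter.Eventually.of_forall hinner), integral_finset_sum]
  · exact Finset.sum_eq_zero fun i _ => hterm i
  · intro i _
    have hDi2 : MemLp (fun ω => D ω i) 2 μ :=
      (EuclideanSpace.proj i : EuclideanSpace ℝ (Fin m) →L[ℝ] ℝ).comp_memLp' hD2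
    have hXi2 : MemLp (fun ω => X ω i) 2 μ :=
      (EuclideanSpace.proj i : EuclideanSpace ℝ (Fin m) →L[ℝ] ℝ).comp_memLp' hX2
    simpa [RCLike.inner_apply] using memLp_integrable_inner_aux (E := ℝ) hDi2 hXi2

/-- Force-matching error as an H¹-type distance between coarse
potentials: if `E_μ[h|σ(ξ)] = (−∇Ū^PMF)∘ξ` μ-a.e., then for any differentiable coarse
potential `Ū` (with composed gradients in `L²(μ)`) and `μ̄ = ξ_*μ`:
`L(−∇Ū; h) = L(−∇Ū^PMF; h) + ∫ ‖∇Ū^PMF(z) − ∇Ū(z)‖² dμ̄(z)`. -/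
theorem forceMatching_H1_error
    {Ω : Type*} [MeasurableSpace Ω] (μ : Measure Ω) [IsProbabilityMeasure μ]
    {m : ℕ} (ξ : Ω → EuclideanSpace ℝ (Fin m)) (hξ : Measurable ξ)
    (h : Ω → EuclideanSpace ℝ (Fin m)) (hh : MemLp h 2 μ)
    (Upmf Ubar : EuclideanSpace ℝ (Fin m) → ℝ)
    (hUpmf : Differentiable ℝ Upmf) (hUbar : Differentiable ℝ Ubar)
    (hpmfL2 : MemLp (fun ω => gradient Upmf (ξ ω)) 2 μ)
    (hbarL2 : MemLp (fun ω => gradient Ubar (ξ ω)) 2 μ)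
    (hmatch : μ[h | MeasurableSpace.comap ξ inferInstance] =ᵐ[μ]
      fun ω => -gradient Upmf (ξ ω)) :
    ∫ ω, ‖h ω - -gradient Ubar (ξ ω)‖ ^ 2 ∂μ =
      ∫ ω, ‖h ω - -gradient Upmf (ξ ω)‖ ^ 2 ∂μ +
        ∫ z, ‖gradient Upmf z - gradient Ubar z‖ ^ 2 ∂(μ.map ξ) := by
  have hAmeas : Measurable (gradient Upmf) := measurable_gradient_aux Upmf
  have hBmeas : Measurable (gradient Ubar) := measurable_gradient_aux Ubar
  have hm : MeasurableSpace.comap ξ inferInstance ≤ ‹MeasurableSpace Ω› := hξ.comap_le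
  haveI : SigmaFinite (μ.trim hm) := inferInstance
  have hξm : Measurable[MeasurableSpace.comap ξ inferInstance] ξ := fun s hs => ⟨s, hs, rfl⟩
  have hX2 : MemLp (fun ω => h ω + gradient Upmf (ξ ω)) 2 μ := hh.add hpmfL2
  have hD2 : MemLp (fun ω => gradient Ubar (ξ ω) - gradient Upmf (ξ ω)) 2 μ :=
    hbarL2.sub hpmfL2
  have hDmeas : Measurable[MeasurableSpace.comap ξ inferInstance]
      (fun ω => gradient Ubar (ξ ω) - gradient Upmf (ξ ω)) :=
    (hBmeas.comp hξm).sub (hAmeas.comp hξm)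
  -- conditional expectation of X = h + ∇Upmf∘ξ is zero
  have hcondX : μ[(fun ω => h ω + gradient Upmf (ξ ω)) |
      MeasurableSpace.comap ξ inferInstance] =ᵐ[μ] 0 := by
    have h1 : μ[(fun ω => h ω + gradient Upmf (ξ ω)) |
        MeasurableSpace.comap ξ inferInstance] =ᵐ[μ]
        μ[h | MeasurableSpace.comap ξ inferInstance] +
          μ[(fun ω => gradient Upmf (ξ ω)) | MeasurableSpace.comap ξ inferInstance] :=
      condExp_add (hh.integrable one_le_two) (hpmfL2.integrable one_le_two) _
    have h2 : μ[(fun ω => gradient Upmf (ξ ω)) |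
        MeasurableSpace.comap ξ inferInstance] = fun ω => gradient Upmf (ξ ω) :=
      condExp_of_stronglyMeasurable hm ((hAmeas.comp hξm).stronglyMeasurable)
        (hpmfL2.integrable one_le_two)
    filter_upwards [h1, hmatch] with ω h1ω h2ω
    simp only [Pi.add_apply, h2] at h1ω
    simp only [h1ω, h2ω, Pi.zero_apply]
    abel
  have hcross : ∫ ω, (inner ℝ (h ω + gradient Upmf (ξ ω))
      (gradient Ubar (ξ ω) - gradient Upmf (ξ ω)) : ℝ) ∂μ = 0 :=
    cross_term_zero μ ξ hξ _ _ hX2 hD2 hDmeas hcondX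
  -- integrabilities of the squared norms
  have hXsq : Integrable (fun ω => ‖h ω + gradient Upmf (ξ ω)‖ ^ 2) μ :=
    (memLp_two_iff_integrable_sq_norm hX2.aestronglyMeasurable).mp hX2
  have hDsq : Integrable (fun ω => ‖gradient Ubar (ξ ω) - gradient Upmf (ξ ω)‖ ^ 2) μ :=
    (memLp_two_iff_integrable_sq_norm hD2.aestronglyMeasurable).mp hD2
  have hXDint : Integrable (fun ω => (inner ℝ (h ω + gradient Upmf (ξ ω))
      (gradient Ubar (ξ ω) - gradient Upmf (ξ ω)) : ℝ)) μ :=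
    memLp_integrable_inner_aux hX2 hD2
  -- pointwise expansion
  have hpt : ∀ ω, ‖h ω - -gradient Ubar (ξ ω)‖ ^ 2
      = ‖h ω + gradient Upmf (ξ ω)‖ ^ 2
        + 2 * (inner ℝ (h ω + gradient Upmf (ξ ω))
            (gradient Ubar (ξ ω) - gradient Upmf (ξ ω)) : ℝ)
        + ‖gradient Ubar (ξ ω) - gradient Upmf (ξ ω)‖ ^ 2 := by
    intro ω
    have heq : h ω - -gradient Ubar (ξ ω)
        = (h ω + gradient Upmf (ξ ω))
          + (gradient Ubar (ξ ω) - gradient Upmf (ξ ω)) := by abel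
    rw [heq, norm_add_sq_real]
  -- pushforward identity
  have hpush : ∫ z, ‖gradient Upmf z - gradient Ubar z‖ ^ 2 ∂(μ.map ξ)
      = ∫ ω, ‖gradient Ubar (ξ ω) - gradient Upmf (ξ ω)‖ ^ 2 ∂μ := by
    rw [integral_map (f := fun z => ‖gradient Upmf z - gradient Ubar z‖ ^ 2) hξ.aemeasurable
      (((hAmeas.sub hBmeas).norm.pow_const 2).aestronglyMeasurable)]
    congr 1
    funext ω
    rw [norm_sub_rev]
  calc ∫ ω, ‖h ω - -gradient Ubar (ξ ω)‖ ^ 2 ∂μ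
      = ∫ ω, (‖h ω + gradient Upmf (ξ ω)‖ ^ 2
          + 2 * (inner ℝ (h ω + gradient Upmf (ξ ω))
              (gradient Ubar (ξ ω) - gradient Upmf (ξ ω)) : ℝ)
          + ‖gradient Ubar (ξ ω) - gradient Upmf (ξ ω)‖ ^ 2) ∂μ :=
        integral_congr_ae (Filter.Eventually.of_forall hpt)
    _ = (∫ ω, (‖h ω + gradient Upmf (ξ ω)‖ ^ 2
            + 2 * (inner ℝ (h ω + gradient Upmf (ξ ω))
              (gradient Ubar (ξ ω) - gradient Upmf (ξ ω)) : ℝ)) ∂μ)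
          + ∫ ω, ‖gradient Ubar (ξ ω) - gradient Upmf (ξ ω)‖ ^ 2 ∂μ :=
        integral_add (hXsq.add (hXDint.const_mul 2)) hDsq
    _ = (∫ ω, ‖h ω + gradient Upmf (ξ ω)‖ ^ 2 ∂μ
          + ∫ ω, 2 * (inner ℝ (h ω + gradient Upmf (ξ ω))
              (gradient Ubar (ξ ω) - gradient Upmf (ξ ω)) : ℝ) ∂μ)
          + ∫ ω, ‖gradient Ubar (ξ ω) - gradient Upmf (ξ ω)‖ ^ 2 ∂μ := by
        rw [integral_add hXsq (hXDint.const_mul 2)]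
    _ = ∫ ω, ‖h ω + gradient Upmf (ξ ω)‖ ^ 2 ∂μ
          + ∫ ω, ‖gradient Ubar (ξ ω) - gradient Upmf (ξ ω)‖ ^ 2 ∂μ := by
        rw [integral_const_mul, hcross, mul_zero, add_zero]
    _ = ∫ ω, ‖h ω - -gradient Upmf (ξ ω)‖ ^ 2 ∂μ
          + ∫ z, ‖gradient Upmf z - gradient Ubar z‖ ^ 2 ∂(μ.map ξ) := by
        rw [hpush]
        simp only [sub_neg_eq_add]
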